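/- Let a finite index set [n] be partitioned into n₀ disjoint blocks B₁,…,B_{n₀}, with holes H_j = [n] \ B_j. Let (X_i) take values in 𝒳, fix x ∈ 𝒳 and ζ ∈ ℕ, and write N_S(x) = #{i ∈ S : X_i = x}, N(x) = N_{[n]}(x). Define P_j = 1{N_{H_j}(x) = ζ} − 1{N(x) = ζ}. Then Σ_{j=1}^{n₀} P_j ≤ ζ + 1. -/
import Mathlib


open Finset

/-- `Σ_j (1{N_{H_j}(x) = ζ} − 1{N(x) = ζ}) ≤ ζ + 1` for holes of a block partition. -/
theorem stmt12 {ι 𝒳 : Type*} [Fintype ι] [DecidableEq ι] [DecidableEq 𝒳]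
    (n₀ : ℕ) (B : Fin n₀ → Finset ι)
    (hdisj : ∀ j k, j ≠ k → Disjoint (B j) (B k))
    (hcover : ∀ i : ι, ∃ j, i ∈ B j)
    (Xs : ι → 𝒳) (x : 𝒳) (ζ : ℕ) :
    (∑ j : Fin n₀,
        ((if ((univ \ B j).filter (fun i => Xs i = x)).card = ζ then (1:ℝ) else 0) -
          (if (univ.filter (fun i => Xs i = x)).card = ζ then (1:ℝ) else 0)))
      ≤ (ζ : ℝ) + 1 := by
  classical
  set S := univ.filter (fun i => Xs i = x) with hS
  set N := S.card with hN
  set t : Fin n₀ → ℕ := fun j => ((B j).filter (fun i => Xs i = x)).card with ht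
  have hsubS : ∀ j, (B j).filter (fun i => Xs i = x) ⊆ S := by
    intro j i hi
    simp only [hS, mem_filter, mem_univ, true_and] at *
    exact hi.2
  have htle : ∀ j, t j ≤ N := fun j => card_le_card (hsubS j)
  have hcard : ∀ j, ((univ \ B j).filter (fun i => Xs i = x)).card = N - t j := by
    intro j
    have he : (univ \ B j).filter (fun i => Xs i = x)
        = S \ ((B j).filter (fun i => Xs i = x)) := by
      ext i
      simp only [hS, mem_filter, mem_sdiff, mem_univ, true_and]
      tauto
    rw [he, card_sdiff_of_subset (hsubS j)]
  have hsum : ∑ j, t j = N := by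
    rw [hN, hS, ← Finset.card_biUnion]
    · congr 1
      ext i
      simp only [mem_biUnion, mem_univ, true_and, mem_filter]
      constructor
      · rintro ⟨j, _, h⟩; exact h
      · intro h
        obtain ⟨j, hj⟩ := hcover i
        exact ⟨j, hj, h⟩
    · intro a _ b _ hab
      exact disjoint_filter_filter (hdisj a b hab)
  by_cases hNζ : N = ζ
  · -- each term ≤ 0
    have : ∀ j : Fin n₀,
        ((if ((univ \ B j).filter (fun i => Xs i = x)).card = ζ then (1:ℝ) else 0) -
          (if (univ.filter (fun i => Xs i = x)).card = ζ then (1:ℝ) else 0)) ≤ 0 := by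
      intro j
      rw [show (univ.filter (fun i => Xs i = x)).card = N from rfl, if_pos hNζ]
      split <;> norm_num
    refine le_trans (Finset.sum_nonpos fun j _ => this j) (by positivity)
  · have hterm : ∀ j : Fin n₀,
        ((if ((univ \ B j).filter (fun i => Xs i = x)).card = ζ then (1:ℝ) else 0) -
          (if (univ.filter (fun i => Xs i = x)).card = ζ then (1:ℝ) else 0))
        = (if N - t j = ζ then (1:ℝ) else 0) := by
      intro j
      rw [show (univ.filter (fun i => Xs i = x)).card = N from rfl, if_neg hNζ, hcard j]
      ring
    rw [Finset.sum_congr rfl (fun j _ => hterm j), Finset.sum_boole]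
    set K := (univ.filter (fun j => N - t j = ζ)).card with hK
    by_cases hlt : N < ζ
    · have : K = 0 := by
        rw [hK, Finset.card_eq_zero, Finset.filter_eq_empty_iff]
        intro j _
        omega
      rw [this]
      push_cast
      positivity
    · -- ζ < N
      have hζN : ζ < N := by omega
      have hfeq : univ.filter (fun j => N - t j = ζ) = univ.filter (fun j => t j = N - ζ) := by
        apply Finset.filter_congr
        intro j _
        have := htle j
        constructor <;> intro h <;> omega
      have hKmul : K * (N - ζ) ≤ N := by
        calc K * (N - ζ) = ∑ j ∈ univ.filter (fun j => t j = N - ζ), t j := by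
              rw [Finset.sum_congr rfl (fun j hj => (Finset.mem_filter.1 hj).2),
                Finset.sum_const, smul_eq_mul, hK, hfeq]
          _ ≤ ∑ j, t j := Finset.sum_le_sum_of_subset (Finset.filter_subset _ _)
          _ = N := hsum
      have hNle : N ≤ (ζ + 1) * (N - ζ) := by
        have hd : 1 ≤ N - ζ := by omega
        nlinarith [Nat.sub_add_cancel (le_of_lt hζN)]
      have hKle : K ≤ ζ + 1 := by
        have := le_trans hKmul hNle
        exact Nat.le_of_mul_le_mul_right this (by omega)
      calc (K : ℝ) ≤ ((ζ + 1 : ℕ) : ℝ) := by exact_mod_cast hKle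
        _ = (ζ : ℝ) + 1 := by push_cast; ring
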